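/- Hivert's operator π̃_i is idempotent: π̃_i² = π̃_i as linear operators on ℂ[x_1,...,x_n]. -/

import Mathlib

open MvPolynomial

/-- Hivert's quasisymmetric swap on exponent vectors: exchange the exponents in
positions `i` and `i+1` if one of them is zero, otherwise do nothing. -/
noncomputable def tswapE (n i : ℕ) (hi : i + 1 < n) (β : Fin n →₀ ℕ) : Fin n →₀ ℕ :=
  if β ⟨i, by omega⟩ = 0 ∨ β ⟨i + 1, hi⟩ = 0 then
    β.equivMapDomain (Equiv.swap (⟨i, by omega⟩ : Fin n) ⟨i + 1, hi⟩)
  else β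

/-- Hivert's quasisymmetric action `s̃ᵢ` on polynomials, acting monomial-wise by
`s̃ᵢ(x^β) = x^(s̃ᵢ β)` and extended linearly. -/
noncomputable def stilde (n i : ℕ) (hi : i + 1 < n) (f : MvPolynomial (Fin n) ℂ) :
    MvPolynomial (Fin n) ℂ :=
  f.support.sum fun β => monomial (tswapE n i hi β) (coeff β f)

/-- Hivert's operator `π̃ᵢ`, given by its explicit action on monomials:
`π̃ᵢ(x^β) = 0` if `βᵢ₊₁ ≠ 0`, and otherwise
`π̃ᵢ(x^β) = Σ_{j=0}^{βᵢ} x^{(β₁,…,βᵢ−j, j,…,βₙ)}` (transferring `j` units from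
position `i` to position `i+1`); extended linearly. -/
noncomputable def ptildeE (n i : ℕ) (hi : i + 1 < n) (f : MvPolynomial (Fin n) ℂ) :
    MvPolynomial (Fin n) ℂ :=
  f.support.sum fun β =>
    if β ⟨i + 1, hi⟩ = 0 then
      ∑ j ∈ Finset.range (β ⟨i, by omega⟩ + 1),
        monomial (β.update ⟨i, by omega⟩ (β ⟨i, by omega⟩ - j)
          + Finsupp.single (⟨i + 1, hi⟩ : Fin n) j) (coeff β f)
    else 0

noncomputable def ptF (n i : ℕ) (hi : i + 1 < n) (β : Fin n →₀ ℕ) (c : ℂ) :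
    MvPolynomial (Fin n) ℂ :=
  if β ⟨i + 1, hi⟩ = 0 then
    ∑ j ∈ Finset.range (β ⟨i, by omega⟩ + 1),
      monomial (β.update ⟨i, by omega⟩ (β ⟨i, by omega⟩ - j)
        + Finsupp.single (⟨i + 1, hi⟩ : Fin n) j) c
  else 0

lemma ptildeE_eq (n i : ℕ) (hi : i + 1 < n) (f : MvPolynomial (Fin n) ℂ) :
    ptildeE n i hi f = (AddMonoidAlgebra.coeff f).sum (ptF n i hi) := by
  rw [MvPolynomial.sum_def]; rfl

lemma ptF_zero (n i : ℕ) (hi : i + 1 < n) (β : Fin n →₀ ℕ) : ptF n i hi β 0 = 0 := by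
  unfold ptF; split <;> simp

lemma ptF_add (n i : ℕ) (hi : i + 1 < n) (β : Fin n →₀ ℕ) (b₁ b₂ : ℂ) :
    ptF n i hi β (b₁ + b₂) = ptF n i hi β b₁ + ptF n i hi β b₂ := by
  unfold ptF; split <;> simp [Finset.sum_add_distrib]

lemma ptildeE_add (n i : ℕ) (hi : i + 1 < n) (f g : MvPolynomial (Fin n) ℂ) :
    ptildeE n i hi (f + g) = ptildeE n i hi f + ptildeE n i hi g := by
  rw [ptildeE_eq, ptildeE_eq, ptildeE_eq, AddMonoidAlgebra.coeff_add]
  exact Finsupp.sum_add_index' (ptF_zero n i hi) (ptF_add n i hi)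

lemma ptildeE_zero (n i : ℕ) (hi : i + 1 < n) : ptildeE n i hi 0 = 0 := by
  simp [ptildeE]

lemma ptildeE_monomial (n i : ℕ) (hi : i + 1 < n) (β : Fin n →₀ ℕ) (c : ℂ) :
    ptildeE n i hi (monomial β c) = ptF n i hi β c := by
  rw [ptildeE_eq, show AddMonoidAlgebra.coeff (monomial β c) = Finsupp.single β c from rfl]
  exact Finsupp.sum_single_index (ptF_zero n i hi β)

lemma ptildeE_sum {α : Type*} (n i : ℕ) (hi : i + 1 < n) (s : Finset α)
    (g : α → MvPolynomial (Fin n) ℂ) :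
    ptildeE n i hi (∑ x ∈ s, g x) = ∑ x ∈ s, ptildeE n i hi (g x) := by
  classical
  induction s using Finset.induction_on with
  | empty => simp [ptildeE_zero]
  | @insert _ _ h ih => simp [Finset.sum_insert h, ptildeE_add, ih]

lemma finsupp_update_apply_ne {α M : Type*} [Zero M] (β : α →₀ M) {a a' : α} (h : a' ≠ a)
    (v : M) : β.update a v a' = β a' := by
  classical
  rw [Finsupp.coe_update, Function.update_of_ne h]

lemma ptilde_idem_monomial (n i : ℕ) (hi : i + 1 < n) (β : Fin n →₀ ℕ) (c : ℂ) :
    ptildeE n i hi (ptildeE n i hi (monomial β c)) = ptildeE n i hi (monomial β c) := by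
  conv_lhs => rw [ptildeE_monomial]
  by_cases h : β ⟨i + 1, hi⟩ = 0
  · have hne : (⟨i + 1, hi⟩ : Fin n) ≠ ⟨i, by omega⟩ := by simp [Fin.ext_iff]
    rw [show ptF n i hi β c = ∑ j ∈ Finset.range (β ⟨i, by omega⟩ + 1),
        monomial (β.update ⟨i, by omega⟩ (β ⟨i, by omega⟩ - j)
          + Finsupp.single (⟨i + 1, hi⟩ : Fin n) j) c from if_pos h, ptildeE_sum]
    have key : ∀ b ∈ Finset.range (β ⟨i, by omega⟩ + 1), b ≠ 0 →
        ptildeE n i hi (monomial (β.update ⟨i, by omega⟩ (β ⟨i, by omega⟩ - b)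
          + Finsupp.single (⟨i + 1, hi⟩ : Fin n) b) c) = 0 := by
      intro b _ hb
      rw [ptildeE_monomial]
      have hval : (β.update ⟨i, by omega⟩ (β ⟨i, by omega⟩ - b)
          + Finsupp.single (⟨i + 1, hi⟩ : Fin n) b) ⟨i + 1, hi⟩ = b := by
        rw [Finsupp.add_apply, finsupp_update_apply_ne _ hne, Finsupp.single_eq_same, h,
          zero_add]
      exact if_neg (by rw [hval]; exact hb)
    rw [Finset.sum_eq_single_of_mem 0 (Finset.mem_range.mpr (Nat.succ_pos _)) key,
      Nat.sub_zero, Finsupp.single_zero, add_zero, Finsupp.update_self]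
  · rw [show ptF n i hi β c = 0 from if_neg h, ptildeE_zero, ptildeE_monomial,
      show ptF n i hi β c = 0 from if_neg h]

/-- Hivert's operator `π̃ᵢ` is idempotent: `π̃ᵢ² = π̃ᵢ` as linear
operators on `ℂ[x₁,…,xₙ]`. -/
theorem ptilde_idempotent (n i : ℕ) (hi : i + 1 < n) (f : MvPolynomial (Fin n) ℂ) :
    ptildeE n i hi (ptildeE n i hi f) = ptildeE n i hi f := by
  induction f using MvPolynomial.induction_on' with
  | monomial β c => exact ptilde_idem_monomial n i hi β c
  | add p q hp hq => rw [ptildeE_add, ptildeE_add, hp, hq]
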